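/- Every path P_n = v_1, v_2, ..., v_n with n ≥ 3 vertices admits, for each choice of signs (ε_1, ε_n) ∈ {−1, +1}², an in-out-proper orientation D with d_D^±(v_1) = ε_1, d_D^±(v_n) = ε_n, and |d_D^±(v_i)| ≤ 2 for every vertex v_i. -/

import Mathlib

/-- An orientation of a simple graph `G`: for each edge `{u,v}` exactly one of the
two directions is chosen. `dir u v = true` means the arc goes from `u` to `v`. -/
structure Orient {V : Type*} (G : SimpleGraph V) where
  dir : V → V → Bool
  consistent : ∀ u v, G.Adj u v → dir u v = !dir v u

variable {V : Type*}

/-- In-degree of `v` in the orientation `D`. -/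
def inDeg [Fintype V] (G : SimpleGraph V) [DecidableRel G.Adj] (D : Orient G) (v : V) : ℕ :=
  (Finset.univ.filter (fun u => G.Adj u v ∧ D.dir u v = true)).card

/-- Out-degree of `v` in the orientation `D`. -/
def outDeg [Fintype V] (G : SimpleGraph V) [DecidableRel G.Adj] (D : Orient G) (v : V) : ℕ :=
  (Finset.univ.filter (fun u => G.Adj u v ∧ D.dir v u = true)).card

/-- In-out-degree `d_D^±(v) = d_D^-(v) - d_D^+(v)`. -/
def ioDeg [Fintype V] (G : SimpleGraph V) [DecidableRel G.Adj] (D : Orient G) (v : V) : ℤ :=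
  (inDeg G D v : ℤ) - (outDeg G D v : ℤ)

/-- An orientation is in-out-proper if adjacent vertices have distinct in-out-degrees. -/
def IsIOProper [Fintype V] (G : SimpleGraph V) [DecidableRel G.Adj] (D : Orient G) : Prop :=
  ∀ u v, G.Adj u v → ioDeg G D u ≠ ioDeg G D v

lemma ioDeg_eq_sum [Fintype V] (G : SimpleGraph V) [DecidableRel G.Adj] (D : Orient G) (v : V) :
    ioDeg G D v = ∑ u ∈ G.neighborFinset v, (if D.dir u v then (1:ℤ) else -1) := by
  classical
  have hin : inDeg G D v = ((G.neighborFinset v).filter (fun u => D.dir u v = true)).card := by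
    rw [inDeg]; congr 1; ext u
    simp [SimpleGraph.mem_neighborFinset, G.adj_comm]
  have hout : outDeg G D v =
      ((G.neighborFinset v).filter (fun u => ¬ (D.dir u v = true))).card := by
    rw [outDeg]; congr 1; ext u
    simp only [Finset.mem_filter, Finset.mem_univ, true_and, SimpleGraph.mem_neighborFinset]
    constructor
    · rintro ⟨h, h2⟩
      refine ⟨h.symm, ?_⟩
      rw [D.consistent u v h, h2]; simp
    · rintro ⟨h, h2⟩
      refine ⟨h.symm, ?_⟩
      have hc := D.consistent u v h.symm
      cases hd : D.dir v u
      · rw [hd] at hc; simp at hc; exact absurd hc h2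
      · rfl
  rw [ioDeg, hin, hout, Finset.sum_ite]
  simp only [Finset.sum_const, nsmul_eq_mul, mul_one, mul_neg_one, Bool.not_eq_true]
  ring

/-- The orientation of the path graph determined by `f`. -/
def pathOrient (n : ℕ) (f : ℕ → Bool) : Orient (SimpleGraph.pathGraph n) where
  dir u v := if u.val + 1 = v.val then f u.val else if v.val + 1 = u.val then ! f v.val else false
  consistent := by
    intro u v huv
    rw [SimpleGraph.pathGraph_adj] at huv
    rcases huv with h | h
    · rw [if_pos h, if_neg (by omega : ¬ (v.val + 1 = u.val)), if_pos h]
      simp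
    · rw [if_neg (by omega : ¬ (u.val + 1 = v.val)), if_pos h, if_pos h]

lemma nbrs_first (n : ℕ) (hn : 2 ≤ n) [DecidableRel (SimpleGraph.pathGraph n).Adj] :
    (SimpleGraph.pathGraph n).neighborFinset ⟨0, by omega⟩ = {⟨1, by omega⟩} := by
  ext u
  simp only [SimpleGraph.mem_neighborFinset, SimpleGraph.pathGraph_adj, Finset.mem_singleton,
    Fin.ext_iff]
  omega

lemma nbrs_last (n : ℕ) (hn : 2 ≤ n) [DecidableRel (SimpleGraph.pathGraph n).Adj] :
    (SimpleGraph.pathGraph n).neighborFinset ⟨n - 1, by omega⟩ = {⟨n - 2, by omega⟩} := by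
  ext u
  simp only [SimpleGraph.mem_neighborFinset, SimpleGraph.pathGraph_adj, Finset.mem_singleton,
    Fin.ext_iff]
  omega

lemma nbrs_mid (n k : ℕ) (hk0 : 0 < k) (hk : k < n - 1)
    [DecidableRel (SimpleGraph.pathGraph n).Adj] :
    (SimpleGraph.pathGraph n).neighborFinset ⟨k, by omega⟩ =
      {⟨k - 1, by omega⟩, ⟨k + 1, by omega⟩} := by
  ext u
  simp only [SimpleGraph.mem_neighborFinset, SimpleGraph.pathGraph_adj, Finset.mem_insert,
    Finset.mem_singleton, Fin.ext_iff]
  omega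

lemma path_main (n : ℕ) (hn : 3 ≤ n) [DecidableRel (SimpleGraph.pathGraph n).Adj]
    (s : ℕ → ℤ) (hs : ∀ i, s i = 1 ∨ s i = -1)
    (hd : ∀ i, 1 ≤ i → i + 2 ≤ n - 1 → s (i - 1) - s i ≠ s i - s (i + 1)) :
    ∃ D : Orient (SimpleGraph.pathGraph n), IsIOProper _ D ∧
      ioDeg (SimpleGraph.pathGraph n) D ⟨0, by linarith⟩ = -s 0 ∧
      ioDeg (SimpleGraph.pathGraph n) D ⟨n - 1, Nat.sub_lt (by linarith) one_pos⟩ = s (n - 2) ∧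
      ∀ v, |ioDeg (SimpleGraph.pathGraph n) D v| ≤ 2 := by
  set f : ℕ → Bool := fun i => decide (s i = 1) with hf
  have hχ : ∀ i, (if f i then (1:ℤ) else -1) = s i := by
    intro i
    rcases hs i with h | h <;> simp [hf, h]
  set D := pathOrient n f with hD
  have d1 : ∀ (k : ℕ) (h1 : 1 ≤ k) (h2 : k < n) (h3 : k - 1 < n),
      D.dir ⟨k - 1, h3⟩ ⟨k, h2⟩ = f (k - 1) := by
    intro k h1 h2 h3
    show (if k - 1 + 1 = k then f (k-1) else if k + 1 = k - 1 then ! f k else false) = f (k - 1)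
    rw [if_pos (by omega)]
  have d2 : ∀ (k : ℕ) (h2 : k < n) (h3 : k + 1 < n),
      D.dir ⟨k + 1, h3⟩ ⟨k, h2⟩ = ! f k := by
    intro k h2 h3
    show (if k + 1 + 1 = k then f (k+1) else if k + 1 = k + 1 then ! f k else false) = ! f k
    rw [if_neg (by omega), if_pos rfl]
  -- ioDeg at the first vertex
  have hio0 : ∀ (h : (0:ℕ) < n), ioDeg _ D ⟨0, h⟩ = -s 0 := by
    intro h
    rw [ioDeg_eq_sum, nbrs_first n (by omega), Finset.sum_singleton]
    have := d2 0 (by omega) (by omega)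
    rw [this]
    rcases hs 0 with h0 | h0 <;> simp [hf, h0]
  have hiolast : ∀ (h : n - 1 < n), ioDeg _ D ⟨n - 1, h⟩ = s (n - 2) := by
    intro h
    rw [ioDeg_eq_sum, nbrs_last n (by omega), Finset.sum_singleton]
    have e : (⟨n - 2, by omega⟩ : Fin n) = ⟨(n-1) - 1, by omega⟩ := by
      simp only [Fin.mk.injEq]; omega
    rw [e, d1 (n-1) (by omega) (by omega), hχ]
    congr 1 <;> omega
  have hiomid : ∀ (k : ℕ) (hk0 : 0 < k) (hk : k < n - 1) (h : k < n),
      ioDeg _ D ⟨k, h⟩ = s (k - 1) - s k := by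
    intro k hk0 hk h
    rw [ioDeg_eq_sum, nbrs_mid n k hk0 hk,
      Finset.sum_pair (by simp only [ne_eq, Fin.mk.injEq]; omega)]
    rw [d1 k (by omega) h (by omega), d2 k h (by omega), hχ]
    cases hfk : f k
    · have hv : s k = -1 := by rcases hs k with h' | h' <;> simp [hf, h'] at hfk ⊢
      (rw [hv]; simp [hfk]) <;> ring_nf
    · have hv : s k = 1 := by rcases hs k with h' | h' <;> simp [hf, h'] at hfk ⊢
      (rw [hv]; simp [hfk]) <;> ring_nf
  refine ⟨D, ?_, hio0 _, hiolast _, ?_⟩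
  · -- proper
    have H : ∀ (u v : Fin n), u.val + 1 = v.val → ioDeg _ D u ≠ ioDeg _ D v := by
      intro u v h
      obtain ⟨i, hi⟩ := u
      obtain ⟨j, hj⟩ := v
      simp only at h
      rcases Nat.eq_zero_or_pos i with rfl | hipos
      · -- u is the first vertex, v has index 1, which is internal since n ≥ 3
        rw [hio0, show (⟨j, hj⟩ : Fin n) = ⟨1, by omega⟩ by simp only [Fin.mk.injEq]; omega,
          hiomid 1 (by omega) (by omega)]
        rcases hs 0 with h0 | h0 <;> rcases hs 1 with h1 | h1 <;>
          rw [h0, h1] <;> norm_num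
      · rcases Nat.lt_or_ge (j) (n - 1) with hjlt | hjge
        · -- both internal
          rw [hiomid i hipos (by omega), hiomid j (by omega) hjlt]
          have : j = i + 1 := by omega
          subst this
          have := hd i hipos (by omega)
          simpa using this
        · -- v is the last vertex
          have hj' : j = n - 1 := by omega
          rw [show (⟨j, hj⟩ : Fin n) = ⟨n-1, by omega⟩ by simp only [Fin.mk.injEq]; omega,
            hiolast, hiomid i hipos (by omega)]
          have hi' : i = n - 2 := by omega
          subst hi'
          rcases hs (n - 2 - 1) with h0 | h0 <;> rcases hs (n-2) with h1 | h1 <;>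
            rw [h0, h1] <;> norm_num
    intro u v hadj
    rw [SimpleGraph.pathGraph_adj] at hadj
    rcases hadj with h | h
    · exact H u v h
    · exact (H v u h).symm
  · -- bound
    intro v
    obtain ⟨k, hk⟩ := v
    rcases Nat.eq_zero_or_pos k with rfl | hkpos
    · rw [hio0]
      rcases hs 0 with h0 | h0 <;> simp [h0]
    · rcases Nat.lt_or_ge k (n - 1) with hlt | hge
      · rw [hiomid k hkpos hlt]
        rw [abs_le]
        rcases hs (k-1) with h0 | h0 <;> rcases hs k with h1 | h1 <;> rw [h0, h1] <;> norm_num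
      · rw [show (⟨k, hk⟩ : Fin n) = ⟨n-1, by omega⟩ by simp only [Fin.mk.injEq]; omega, hiolast]
        rcases hs (n-2) with h0 | h0 <;> simp [h0]

lemma alt_ne (a : ℤ) (ha : a = 1 ∨ a = -1) (j : ℕ) :
    a * (-1)^j - a * (-1)^(j+1) ≠ a * (-1)^(j+1) - a * (-1)^(j+2) := by
  rcases ha with rfl | rfl <;> rcases neg_one_pow_eq_or ℤ j with h | h <;>
    rw [pow_succ, pow_succ, pow_succ, h] <;> norm_num

/-- Every path `P_n` (`n ≥ 3`) has, for each choice of signs at the two endpoints, an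
in-out-proper orientation realizing those endpoint in-out-degrees with all `|d^±| ≤ 2`. -/
theorem stmt_13 (n : ℕ) (hn : 3 ≤ n) [DecidableRel (SimpleGraph.pathGraph n).Adj]
    (ε₁ εₙ : ℤ) (h1 : ε₁ = 1 ∨ ε₁ = -1) (h2 : εₙ = 1 ∨ εₙ = -1) :
    ∃ D : Orient (SimpleGraph.pathGraph n), IsIOProper _ D ∧
      ioDeg (SimpleGraph.pathGraph n) D ⟨0, by omega⟩ = ε₁ ∧
      ioDeg (SimpleGraph.pathGraph n) D ⟨n - 1, by omega⟩ = εₙ ∧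
      ∀ v, |ioDeg (SimpleGraph.pathGraph n) D v| ≤ 2 := by
  have ha : (-ε₁ : ℤ) = 1 ∨ (-ε₁ : ℤ) = -1 := by omega
  by_cases hc : εₙ = -ε₁ * (-1)^(n-2)
  · -- pure alternating pattern
    set s : ℕ → ℤ := fun i => -ε₁ * (-1)^i with hsdef
    have hs : ∀ i, s i = 1 ∨ s i = -1 := by
      intro i
      rcases ha with h | h <;> rcases neg_one_pow_eq_or ℤ i with h' | h' <;>
        simp [hsdef, h', h]
    obtain ⟨D, hP, h0, hl, hb⟩ := path_main n hn s hs (by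
      intro i hi1 hi2
      obtain ⟨j, rfl⟩ : ∃ j, i = j + 1 := ⟨i - 1, by omega⟩
      simp only [hsdef, Nat.add_sub_cancel]
      exact alt_ne _ ha j)
    refine ⟨D, hP, ?_, ?_, hb⟩
    · rw [h0]; simp [hsdef]
    · rw [hl, hc]
  · -- shifted pattern
    set s : ℕ → ℤ := fun i => if i = 0 then -ε₁ else -ε₁ * (-1)^(i-1) with hsdef
    have hs : ∀ i, s i = 1 ∨ s i = -1 := by
      intro i
      rcases Nat.eq_zero_or_pos i with rfl | hip
      · simpa [hsdef] using ha
      · rcases ha with h | h <;> rcases neg_one_pow_eq_or ℤ (i-1) with h' | h' <;>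
          simp [hsdef, Nat.pos_iff_ne_zero.mp hip, h', h]
    obtain ⟨D, hP, h0, hl, hb⟩ := path_main n hn s hs (by
      intro i hi1 hi2
      rcases Nat.lt_or_ge i 2 with hi | hi
      · have : i = 1 := by omega
        subst this
        have e0 : s 0 = -ε₁ := by simp [hsdef]
        have e1 : s 1 = -ε₁ := by simp [hsdef]
        have e2 : s 2 = -ε₁ * (-1)^1 := by simp [hsdef]
        show s (1-1) - s 1 ≠ s 1 - s (1+1)
        rw [show (1:ℕ)-1 = 0 from rfl, e0, e1, show (1:ℕ)+1 = 2 from rfl, e2]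
        rcases h1 with h | h <;> rw [h] <;> norm_num
      · obtain ⟨j, rfl⟩ : ∃ j, i = j + 2 := ⟨i - 2, by omega⟩
        have e0 : s (j+1) = -ε₁ * (-1)^j := by simp [hsdef]
        have e1 : s (j+2) = -ε₁ * (-1)^(j+1) := by simp [hsdef]
        have e2 : s (j+3) = -ε₁ * (-1)^(j+2) := by simp [hsdef]
        show s (j+2-1) - s (j+2) ≠ s (j+2) - s (j+2+1)
        rw [show j+2-1 = j+1 by omega, show j+2+1 = j+3 from rfl, e0, e1, e2]
        exact alt_ne _ ha j)
    refine ⟨D, hP, ?_, ?_, hb⟩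
    · rw [h0]; simp [hsdef]
    · rw [hl]
      have hne : n - 2 ≠ 0 := by omega
      have hpow : (-1 : ℤ)^(n-2) = (-1)^(n-2-1) * (-1) := by
        rw [← pow_succ]
        congr 1
        omega
      rw [hpow] at hc
      simp only [hsdef, if_neg hne]
      rcases neg_one_pow_eq_or ℤ (n-2-1) with h'' | h'' <;>
        rw [h''] at hc ⊢ <;>
        rcases h1 with rfl | rfl <;> rcases h2 with rfl | rfl <;>
        norm_num at hc <;> norm_num
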